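/- Let C be a nonempty convex cone in a finite-dimensional real vector space X, let F be an open face of C, and let y ∈ ∂F ∩ C (the topological boundary of F intersected with C). Then the unique open face F_y of C containing y is contained in ∂F. -/

import Mathlib

variable {X : Type*} [NormedAddCommGroup X] [NormedSpace ℝ X] [FiniteDimensional ℝ X]

/-- A convex cone: a set closed under addition and positive scalar multiplication. -/
def IsConvexCone (C : Set X) : Prop :=
  (∀ x ∈ C, ∀ y ∈ C, x + y ∈ C) ∧ (∀ c : ℝ, 0 < c → ∀ x ∈ C, c • x ∈ C)

/-- `F` is open inside its linear span (with the subspace topology). -/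
def OpenInSpan (F : Set X) : Prop :=
  IsOpen {v : Submodule.span ℝ F | (v : X) ∈ F}

/-- The basic properties of a candidate face of `C`: a nonempty convex subcone of `C`,
open in its linear span. -/
def FaceProp (C F : Set X) : Prop :=
  F.Nonempty ∧ F ⊆ C ∧ IsConvexCone F ∧ OpenInSpan F

/-- An open face of `C`: a nonempty convex subcone of `C`, open in its linear span,
and maximal among subsets of `C` with these properties. -/
def IsOpenFace (C F : Set X) : Prop :=
  FaceProp C F ∧ ∀ F' : Set X, FaceProp C F' → F ⊆ F' → F' = F

lemma IsConvexCone.convex' {F : Set X} (h : IsConvexCone F) : Convex ℝ F := by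
  intro x hx y hy a b ha hb hab
  rcases ha.eq_or_lt with ha0 | ha0
  · have hb1 : b = 1 := by linarith
    simpa [← ha0, hb1] using hy
  rcases hb.eq_or_lt with hb0 | hb0
  · have ha1 : a = 1 := by linarith
    simpa [← hb0, ha1] using hx
  exact h.1 _ (h.2 a ha0 x hx) _ (h.2 b hb0 y hy)

lemma openInSpan_iff (F : Set X) :
    OpenInSpan F ↔ ∀ p ∈ F, ∃ ε > 0, ∀ v ∈ Submodule.span ℝ F, ‖v - p‖ < ε → v ∈ F := by
  constructor
  · intro h p hp
    have hpV : p ∈ Submodule.span ℝ F := Submodule.subset_span hp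
    obtain ⟨ε, hε, hball⟩ := Metric.isOpen_iff.mp h ⟨p, hpV⟩ hp
    refine ⟨ε, hε, fun v hv hvp => ?_⟩
    have : (⟨v, hv⟩ : Submodule.span ℝ F) ∈ Metric.ball (⟨p, hpV⟩ : Submodule.span ℝ F) ε := by
      rw [Metric.mem_ball, dist_eq_norm]
      exact hvp
    exact hball this
  · intro h
    unfold OpenInSpan
    rw [Metric.isOpen_iff]
    rintro ⟨v, hv⟩ hvF
    obtain ⟨ε, hε, hball⟩ := h v hvF
    refine ⟨ε, hε, ?_⟩
    rintro ⟨u, hu⟩ hmem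
    rw [Metric.mem_ball, dist_eq_norm] at hmem
    exact hball u hu hmem

set_option maxHeartbeats 1000000 in
set_option synthInstance.maxHeartbeats 400000 in
lemma mem_closure_of_pos_combo (C : Set X) (hcone : IsConvexCone C)
    (F : Set X) (hF : IsOpenFace C F) {w z : X} (hw : w ∈ C) (hz : z ∈ C)
    {c₁ c₂ : ℝ} (hc₁ : 0 < c₁) (hc₂ : 0 < c₂)
    (hcomb : c₁ • w + c₂ • z ∈ Submodule.span ℝ F) :
    w ∈ closure F ∧ z ∈ closure F := by
  classical
  set V : Submodule ℝ X := Submodule.span ℝ F with hV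
  set u : X := c₁ • w + c₂ • z with hu
  obtain ⟨f0, hf0⟩ := hF.1.1
  -- the enlarged candidate face
  set F'' : Set X := {v | ∃ f ∈ F, ∃ s t : ℝ, 0 ≤ s ∧ 0 ≤ t ∧ v = f + s • w + t • z}
    with hF''
  have hFsub : F ⊆ F'' := fun f hf => ⟨f, hf, 0, 0, le_refl _, le_refl _, by simp⟩
  have hsubC : F'' ⊆ C := by
    rintro v ⟨f, hf, s, t, hs, ht, rfl⟩
    have hfC : f ∈ C := hF.1.2.1 hf
    have h1 : f + s • w ∈ C := by
      rcases hs.eq_or_lt with h | h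
      · simpa [← h] using hfC
      · exact hcone.1 _ hfC _ (hcone.2 s h w hw)
    rcases ht.eq_or_lt with h | h
    · simpa [← h] using h1
    · exact hcone.1 _ h1 _ (hcone.2 t h z hz)
  have hconeF'' : IsConvexCone F'' := by
    constructor
    · rintro v ⟨f, hf, s, t, hs, ht, rfl⟩ v' ⟨f', hf', s', t', hs', ht', rfl⟩
      refine ⟨f + f', hF.1.2.2.1.1 _ hf _ hf', s + s', t + t', by linarith, by linarith, ?_⟩
      rw [add_smul, add_smul]; abel
    · rintro c hc v ⟨f, hf, s, t, hs, ht, rfl⟩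
      refine ⟨c • f, hF.1.2.2.1.2 c hc f hf, c * s, c * t,
        by positivity, by positivity, ?_⟩
      rw [smul_add, smul_add, smul_smul, smul_smul]
  -- span of F''
  set S : Submodule ℝ X := Submodule.span ℝ F'' with hS
  have hVS : V ≤ S := Submodule.span_mono hFsub
  have hwS : w ∈ S := by
    have h1 : f0 + (1:ℝ) • w + (0:ℝ) • z ∈ F'' := ⟨f0, hf0, 1, 0, zero_le_one, le_refl _, rfl⟩
    have h2 : f0 + (1:ℝ) • w + (0:ℝ) • z ∈ S := Submodule.subset_span h1
    have h3 := sub_mem h2 (hVS (Submodule.subset_span hf0))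
    simpa using h3
  have hzS : z ∈ S := by
    have h1 : f0 + (0:ℝ) • w + (1:ℝ) • z ∈ F'' := ⟨f0, hf0, 0, 1, le_refl _, zero_le_one, rfl⟩
    have h2 : f0 + (0:ℝ) • w + (1:ℝ) • z ∈ S := Submodule.subset_span h1
    have h3 := sub_mem h2 (hVS (Submodule.subset_span hf0))
    simpa using h3
  -- the parametrization map, made opaque
  obtain ⟨T, hTapp⟩ : ∃ T : (↥V × ℝ × ℝ) →ₗ[ℝ] X,
      ∀ q : ↥V × ℝ × ℝ, T q = (q.1 : X) + (q.2.1 • w + q.2.2 • z) :=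
    ⟨(V.subtype).coprod ((LinearMap.toSpanSingleton ℝ X w).coprod
      (LinearMap.toSpanSingleton ℝ X z)), fun q => by
        simp [LinearMap.coprod_apply, LinearMap.toSpanSingleton_apply]⟩
  have hTS : ∀ q, T q ∈ S := by
    intro q
    rw [hTapp]
    exact add_mem (hVS q.1.2) (add_mem (S.smul_mem _ hwS) (S.smul_mem _ hzS))
  obtain ⟨T', hT'app⟩ : ∃ T' : (↥V × ℝ × ℝ) →ₗ[ℝ] ↥S, ∀ q, (T' q : X) = T q :=
    ⟨T.codRestrict S hTS, fun q => LinearMap.codRestrict_apply S T q⟩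
  have hsurj : Function.Surjective T' := by
    have hmem : ∀ v ∈ S, ∃ q, T q = v := by
      intro v hv
      refine Submodule.span_induction ?_ ?_ ?_ ?_ hv
      · rintro x ⟨f, hf, s, t, hs, ht, rfl⟩
        exact ⟨(⟨f, Submodule.subset_span hf⟩, s, t), by rw [hTapp]; simp; abel⟩
      · exact ⟨0, by simp [hTapp]⟩
      · rintro x y - - ⟨q1, hq1⟩ ⟨q2, hq2⟩
        exact ⟨q1 + q2, by rw [map_add, hq1, hq2]⟩
      · rintro a x - ⟨q, hq⟩
        exact ⟨a • q, by rw [map_smul, hq]⟩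
    rintro ⟨v, hv⟩
    obtain ⟨q, hq⟩ := hmem v hv
    exact ⟨q, Subtype.ext (by rw [hT'app, hq])⟩
  obtain ⟨σ, hσ⟩ := T'.exists_rightInverse_of_surjective (LinearMap.range_eq_top.mpr hsurj)
  have hTσ : ∀ v : ↥S, T (σ v) = (v : X) := by
    intro v
    have h1 : T' (σ v) = v := LinearMap.ext_iff.mp hσ v
    rw [← hT'app, h1]
  obtain ⟨σc, hσcapp⟩ : ∃ σc : ↥S →L[ℝ] ↥V × ℝ × ℝ, ∀ v, σc v = σ v :=
    ⟨LinearMap.toContinuousLinearMap σ, fun v => by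
      rw [LinearMap.coe_toContinuousLinearMap']⟩
  obtain ⟨K, hK0, hKle⟩ : ∃ K : ℝ, 0 ≤ K ∧ ∀ x : ↥S, ‖σc x‖ ≤ K * ‖x‖ :=
    ⟨‖σc‖, ContinuousLinearMap.opNorm_nonneg σc, fun x => σc.le_opNorm x⟩
  -- openness of F''
  have hopen : OpenInSpan F'' := by
    rw [openInSpan_iff]
    intro p hp
    obtain ⟨f, hf, s, t, hs, ht, hpeq⟩ := hp
    have hfV : f ∈ V := Submodule.subset_span hf
    have huV : u ∈ V := hcomb
    obtain ⟨εf, hεf, hballf⟩ := (openInSpan_iff F).mp hF.1.2.2.2 f hf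
    set τ : ℝ := εf / (2 * (‖u‖ + 1)) with hτ
    have hτ0 : 0 < τ := by positivity
    have hfτ : f - τ • u ∈ F := by
      refine hballf _ (sub_mem hfV (V.smul_mem _ huV)) ?_
      have h1 : ‖f - τ • u - f‖ = τ * ‖u‖ := by
        rw [sub_sub_cancel_left, norm_neg, norm_smul, Real.norm_eq_abs, abs_of_pos hτ0]
      rw [h1, hτ]
      rw [div_mul_eq_mul_div, div_lt_iff₀ (by positivity)]
      nlinarith [norm_nonneg u]
    set f' : X := f - τ • u with hf'
    set s' : ℝ := s + τ * c₁ with hs'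
    set t' : ℝ := t + τ * c₂ with ht'
    have hs'0 : 0 < s' := by nlinarith
    have ht'0 : 0 < t' := by nlinarith
    have hps : p = f' + s' • w + t' • z := by
      rw [hpeq, hf', hs', ht', hu]
      module
    have hf'V : f' ∈ V := sub_mem hfV (V.smul_mem _ huV)
    have hpS : p ∈ S := Submodule.subset_span ⟨f, hf, s, t, hs, ht, hpeq⟩
    obtain ⟨ε₁, hε₁, hball₁⟩ := (openInSpan_iff F).mp hF.1.2.2.2 f' hfτ
    set P : ↥S := ⟨p, hpS⟩ with hP
    set up : ↥V := (σ P).1 with hup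
    set ap : ℝ := (σ P).2.1 with hap
    set bp : ℝ := (σ P).2.2 with hbp
    have hPid : (up : X) + (ap • w + bp • z) = p := by
      rw [hup, hap, hbp, ← hTapp (σ P), hTσ P]
    set ku : ↥V := up - ⟨f', hf'V⟩ with hku
    set ka : ℝ := ap - s' with hka
    set kb : ℝ := bp - t' with hkb
    have hkX : (ku : X) + (ka • w + kb • z) = 0 := by
      have h1 : (ku : X) = (up : X) - f' := by rw [hku]; simp
      rw [h1, hka, hkb, sub_smul, sub_smul]
      have h2 : (up:X) - f' + (ap • w - s' • w + (bp • z - t' • z))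
          = ((up:X) + (ap • w + bp • z)) - (f' + s' • w + t' • z) := by abel
      rw [h2, hPid, ← hps, sub_self]
    set m : ℝ := min ε₁ (min s' t') with hm
    have hm0 : 0 < m := lt_min hε₁ (lt_min hs'0 ht'0)
    refine ⟨m / (K + 1), by positivity, ?_⟩
    intro v hvS hvp
    set Vv : ↥S := ⟨v, hvS⟩ with hVv
    have hnormsub : ‖σ Vv - σ P‖ ≤ K * ‖v - p‖ := by
      have h1 : σ Vv - σ P = σc (Vv - P) := by
        rw [map_sub, hσcapp, hσcapp]
      rw [h1]
      have h2 := hKle (Vv - P)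
      have h3 : ‖Vv - P‖ = ‖v - p‖ := rfl
      rwa [h3] at h2
    have hKvp : K * ‖v - p‖ < m := by
      calc K * ‖v - p‖ ≤ K * (m / (K + 1)) := by
            apply mul_le_mul_of_nonneg_left (le_of_lt hvp) hK0
        _ < m := by
            rw [mul_comm, div_mul_eq_mul_div, div_lt_iff₀ (by linarith)]
            nlinarith
    have hfst : ‖(σ Vv).1 - up‖ < m := by
      have h0 : (σ Vv).1 - up = (σ Vv - σ P).1 := rfl
      rw [h0]
      calc ‖(σ Vv - σ P).1‖ ≤ ‖σ Vv - σ P‖ := norm_fst_le _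
        _ ≤ K * ‖v - p‖ := hnormsub
        _ < m := hKvp
    have hsnd1 : |(σ Vv).2.1 - ap| < m := by
      have h1 : (σ Vv).2.1 - ap = ((σ Vv - σ P).2).1 := rfl
      rw [h1]
      calc |((σ Vv - σ P).2).1| ≤ ‖(σ Vv - σ P).2‖ := by
            simpa using norm_fst_le ((σ Vv - σ P).2)
        _ ≤ ‖σ Vv - σ P‖ := norm_snd_le _
        _ ≤ K * ‖v - p‖ := hnormsub
        _ < m := hKvp
    have hsnd2 : |(σ Vv).2.2 - bp| < m := by
      have h1 : (σ Vv).2.2 - bp = ((σ Vv - σ P).2).2 := rfl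
      rw [h1]
      calc |((σ Vv - σ P).2).2| ≤ ‖(σ Vv - σ P).2‖ := by
            simpa using norm_snd_le ((σ Vv - σ P).2)
        _ ≤ ‖σ Vv - σ P‖ := norm_snd_le _
        _ ≤ K * ‖v - p‖ := hnormsub
        _ < m := hKvp
    -- the new representation of v
    set g : ↥V := (σ Vv).1 - ku with hg
    have hgF : (g : X) ∈ F := by
      refine hball₁ _ g.2 ?_
      have h1 : (g : X) - f' = ((σ Vv).1 : X) - (up : X) := by
        rw [hg, hku]
        push_cast
        abel
      rw [h1]
      have h2 : ‖((σ Vv).1 : X) - (up : X)‖ = ‖(σ Vv).1 - up‖ := rfl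
      rw [h2]
      exact lt_of_lt_of_le hfst (min_le_left _ _)
    set a : ℝ := (σ Vv).2.1 - ka with ha
    set b : ℝ := (σ Vv).2.2 - kb with hb
    have ha0 : 0 < a := by
      have h1 := (abs_lt.mp hsnd1).1
      have hms : m ≤ s' := le_trans (min_le_right _ _) (min_le_left _ _)
      rw [ha, hka]
      linarith
    have hb0 : 0 < b := by
      have h1 := (abs_lt.mp hsnd2).1
      have hmt : m ≤ t' := le_trans (min_le_right _ _) (min_le_right _ _)
      rw [hb, hkb]
      linarith
    refine ⟨(g : X), hgF, a, b, le_of_lt ha0, le_of_lt hb0, ?_⟩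
    have hvid : ((σ Vv).1 : X) + ((σ Vv).2.1 • w + (σ Vv).2.2 • z) = v := by
      rw [← hTapp (σ Vv), hTσ Vv]
    have hgX : (g : X) = ((σ Vv).1 : X) - (ku : X) := by rw [hg]; push_cast; ring
    have hre : (g : X) + a • w + b • z
        = (((σ Vv).1:X) + ((σ Vv).2.1 • w + (σ Vv).2.2 • z)) - ((ku:X) + (ka • w + kb • z)) := by
      rw [hgX, ha, hb]
      module
    rw [hre, hkX, hvid, sub_zero]
  -- maximality
  have hface : FaceProp C F'' := ⟨⟨f0, hFsub hf0⟩, hsubC, hconeF'', hopen⟩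
  have hFF : F'' = F := hF.2 F'' hface hFsub
  -- conclude closure membership
  have key : ∀ x : X, (∀ n : ℕ, (1 / (n + 1) : ℝ) • f0 + x ∈ F) → x ∈ closure F := by
    intro x hx
    have h0 : Filter.Tendsto (fun n : ℕ => (1 / (n + 1) : ℝ) • f0 + x)
        Filter.atTop (nhds x) := by
      have h1 : Filter.Tendsto (fun n : ℕ => 1 / ((n : ℝ) + 1)) Filter.atTop (nhds 0) :=
        tendsto_one_div_add_atTop_nhds_zero_nat
      have h2 := (h1.smul_const f0).add_const x
      simpa using h2
    exact mem_closure_of_tendsto h0 (Filter.Eventually.of_forall hx)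
  constructor
  · refine key w fun n => ?_
    have hmem : (1 / (n + 1) : ℝ) • f0 + w ∈ F'' :=
      ⟨(1 / (n + 1) : ℝ) • f0, hF.1.2.2.1.2 _ (by positivity) f0 hf0, 1, 0,
        zero_le_one, le_refl _, by simp⟩
    rwa [hFF] at hmem
  · refine key z fun n => ?_
    have hmem : (1 / (n + 1) : ℝ) • f0 + z ∈ F'' :=
      ⟨(1 / (n + 1) : ℝ) • f0, hF.1.2.2.1.2 _ (by positivity) f0 hf0, 0, 1,
        le_refl _, zero_le_one, by simp⟩
    rwa [hFF] at hmem

/-- If `F` is an open face of a nonempty convex cone `C` and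
`y ∈ ∂F ∩ C`, then any open face of `C` containing `y` (in particular the unique one,
`F_y`) is contained in the topological boundary `∂F`. -/
theorem open_face_of_boundary_point (C : Set X) (hC : C.Nonempty)
    (hcone : IsConvexCone C) (F : Set X) (hF : IsOpenFace C F)
    (y : X) (hy : y ∈ frontier F ∩ C)
    (Fy : Set X) (hFy : IsOpenFace C Fy) (hyFy : y ∈ Fy) :
    Fy ⊆ frontier F := by
  have hyfr : y ∈ frontier F := hy.1
  have hyC : y ∈ C := hy.2
  have hyCl : y ∈ closure F := frontier_subset_closure hyfr
  have hyNotInt : y ∉ interior F := fun h => hyfr.2 h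
  have hVclosed : IsClosed ((Submodule.span ℝ F : Submodule ℝ X) : Set X) :=
    Submodule.closed_of_finiteDimensional _
  have hyV : y ∈ Submodule.span ℝ F :=
    closure_minimal Submodule.subset_span hVclosed hyCl
  intro z hz
  -- construct w = y + t (y - z) ∈ Fy
  obtain ⟨ε, hε, hball⟩ := (openInSpan_iff Fy).mp hFy.1.2.2.2 y hyFy
  set t : ℝ := ε / (2 * (‖y - z‖ + 1)) with ht
  have ht0 : 0 < t := by positivity
  set w : X := y + t • (y - z) with hwdef
  have hwspan : w ∈ Submodule.span ℝ Fy :=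
    add_mem (Submodule.subset_span hyFy)
      (Submodule.smul_mem _ _ (sub_mem (Submodule.subset_span hyFy)
        (Submodule.subset_span hz)))
  have hwFy : w ∈ Fy := by
    refine hball w hwspan ?_
    have h1 : ‖w - y‖ = t * ‖y - z‖ := by
      rw [hwdef, add_sub_cancel_left, norm_smul, Real.norm_eq_abs, abs_of_pos ht0]
    rw [h1, ht, div_mul_eq_mul_div, div_lt_iff₀ (by positivity)]
    nlinarith [norm_nonneg (y - z)]
  have hwC : w ∈ C := hFy.1.2.1 hwFy
  have hzC : z ∈ C := hFy.1.2.1 hz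
  have hcombo : (1 : ℝ) • w + t • z ∈ Submodule.span ℝ F := by
    have h1 : (1 : ℝ) • w + t • z = (1 + t) • y := by
      rw [hwdef]; module
    rw [h1]
    exact Submodule.smul_mem _ _ hyV
  obtain ⟨hwCl, hzCl⟩ := mem_closure_of_pos_combo C hcone F hF hwC hzC
    one_pos ht0 hcombo
  -- z is not in the interior of F
  refine ⟨hzCl, fun hzInt => ?_⟩
  -- F has full span
  have htop : Submodule.span ℝ F = ⊤ := by
    obtain ⟨δ, hδ0, hballz⟩ := Metric.mem_nhds_iff.mp (mem_interior_iff_mem_nhds.mp hzInt)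
    rw [Submodule.eq_top_iff']
    intro x
    set c : ℝ := δ / (2 * (‖x‖ + 1)) with hc
    have hc0 : 0 < c := by positivity
    have h1 : z + c • x ∈ F := by
      apply hballz
      rw [Metric.mem_ball, dist_eq_norm, add_sub_cancel_left, norm_smul,
        Real.norm_eq_abs, abs_of_pos hc0, hc, div_mul_eq_mul_div, div_lt_iff₀ (by positivity)]
      nlinarith [norm_nonneg x]
    have h2 : z + c • x ∈ Submodule.span ℝ F := Submodule.subset_span h1
    have h3 : z ∈ Submodule.span ℝ F := Submodule.subset_span (interior_subset hzInt)
    have h4 : c • x ∈ Submodule.span ℝ F := by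
      simpa using sub_mem h2 h3
    have h5 := Submodule.smul_mem _ c⁻¹ h4
    rwa [smul_smul, inv_mul_cancel₀ (ne_of_gt hc0), one_smul] at h5
  -- hence F is open in X
  have hFopen : IsOpen F := by
    rw [Metric.isOpen_iff]
    intro x hx
    obtain ⟨ε', hε', hball'⟩ := (openInSpan_iff F).mp hF.1.2.2.2 x hx
    refine ⟨ε', hε', fun v hv => ?_⟩
    rw [Metric.mem_ball, dist_eq_norm] at hv
    exact hball' v (by rw [htop]; trivial) hv
  -- y is a convex combination of interior and closure points, hence interior
  have h1t : (0:ℝ) < 1 + t := by linarith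
  have hcomb2 : ((1 + t)⁻¹ * t) • z + (1 + t)⁻¹ • w = y := by
    have h1 : (1 : ℝ) • w + t • z = (1 + t) • y := by rw [hwdef]; module
    have h2 := congrArg (fun v => (1 + t)⁻¹ • v) h1
    simp only [smul_add, smul_smul, one_smul] at h2
    rw [inv_mul_cancel₀ (ne_of_gt h1t), one_smul] at h2
    rw [← h2]
    abel
  have hyInt : y ∈ interior F := by
    rw [← hcomb2]
    refine (hF.1.2.2.1.convex').combo_interior_closure_mem_interior hzInt hwCl
      (by positivity) (by positivity) ?_
    field_simp
    ring
  exact hyNotInt hyInt
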